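/- Let a_h > a_0 > 0 be positive reals and λ > 1, and set E₀ = [ψ(a_h) − ψ(λ·a_h)] − [ψ(a_0) − ψ(λ·a_0)]. If a_h, a_0 are positive integers with a_h > a_0, then E₀ > 0. -/

import Mathlib

open Filter Finset Topology Set

/-- summability of 1/(c+k)^2 -/
lemma dg_summable_sq {c : ℝ} (hc : 0 < c) : Summable (fun k : ℕ => 1 / (c + k) ^ 2) := by
  have h1 : Summable (fun k : ℕ => 1 / ((k : ℝ) + 1) ^ 2) := by
    have := (summable_nat_add_iff (f := fun n : ℕ => 1 / (n : ℝ) ^ 2) 1).2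
      (Real.summable_one_div_nat_pow.2 one_lt_two)
    refine this.congr fun n => ?_
    push_cast; ring
  set m := min c 1 with hm
  have hm0 : 0 < m := lt_min hc one_pos
  refine Summable.of_nonneg_of_le (fun k => by positivity) (fun k => ?_) (h1.mul_left (1 / m ^ 2))
  have hk : m * ((k : ℝ) + 1) ≤ c + k := by
    rcases le_total c 1 with h | h
    · have : m = c := min_eq_left h
      rw [this]; nlinarith [Nat.cast_nonneg (α := ℝ) k]
    · have : m = 1 := min_eq_right h
      rw [this]; nlinarith
  have hpos : (0:ℝ) < m * ((k:ℝ) + 1) := by positivity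
  rw [div_mul_div_comm, one_mul, ← mul_pow]
  exact one_div_le_one_div_of_le (by positivity) (by nlinarith)

/-- telescoping sum -/
lemma dg_hasSum_telescope {c : ℝ} (hc : 0 < c) :
    HasSum (fun k : ℕ => 1 / (c + k) - 1 / (c + k + 1)) (1 / c) := by
  have hnn : ∀ k : ℕ, 0 ≤ 1 / (c + (k:ℝ)) - 1 / (c + k + 1) := by
    intro k
    have h1 : (0:ℝ) < c + k := by positivity
    have h2 : (0:ℝ) < c + k + 1 := by positivity
    rw [sub_nonneg]
    exact one_div_le_one_div_of_le h1 (by linarith)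
  rw [hasSum_iff_tendsto_nat_of_nonneg hnn]
  have hsum : ∀ n : ℕ, ∑ i ∈ Finset.range n, (1 / (c + (i:ℝ)) - 1 / (c + i + 1))
      = 1 / c - 1 / (c + n) := by
    intro n
    have h := Finset.sum_range_sub' (fun i : ℕ => 1 / (c + (i:ℝ))) n
    push_cast at h
    simp only [← add_assoc] at h
    rw [h]
    norm_num
  simp_rw [hsum]
  have hat : Tendsto (fun n : ℕ => (c + (n:ℝ))) atTop atTop :=
    tendsto_atTop_add_const_left _ c tendsto_natCast_atTop_atTop
  have : Tendsto (fun n : ℕ => 1 / (c + (n:ℝ))) atTop (𝓝 0) := by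
    simpa [one_div, Pi.inv_def] using hat.inv_tendsto_atTop
  simpa using tendsto_const_nhds.sub this

/-- Core: x ψ'(x) strictly decreasing with gap -/
lemma dg_core {x y : ℝ} (hx : 1 ≤ x) (hxy : x + 1 ≤ y) :
    ∑' k : ℕ, y / (y + k) ^ 2 < ∑' k : ℕ, x / (x + k) ^ 2 := by
  have hx0 : (0:ℝ) < x := by linarith
  have hy0 : (0:ℝ) < y := by linarith
  set c : ℝ := (2 * x + 1) / (4 * x + 4) with hcdef
  have hc0 : 0 < c := by positivity
  have hc12 : c < 1 / 2 := by
    rw [hcdef, div_lt_div_iff₀ (by linarith) (by norm_num)]; linarith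
  have hxc : 0 < x - c := by linarith
  -- lower bound for the x-sum
  have hlow : x / (x - c) ≤ ∑' k : ℕ, x / (x + k) ^ 2 := by
    have htel := (dg_hasSum_telescope hxc).mul_left x
    have hle : ∀ k : ℕ, x * (1 / (x - c + k) - 1 / (x - c + k + 1)) ≤ x / (x + k) ^ 2 := by
      intro k
      have hk : (0:ℝ) ≤ (k:ℝ) := Nat.cast_nonneg k
      have h1 : (0:ℝ) < x - c + k := by linarith
      have h2 : (0:ℝ) < x - c + k + 1 := by linarith
      have key : (x + k) ^ 2 ≤ (x - c + k) * (x - c + k + 1) := by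
        have h4 : (0:ℝ) < 4 * x + 4 := by linarith
        have hc' : c * (4 * x + 4) = 2 * x + 1 := by
          rw [hcdef]; field_simp
        nlinarith [sq_nonneg (x - 1), sq_nonneg (x + k)]
      have h3 : 1 / (x - c + k) - 1 / (x - c + k + 1) = 1 / ((x - c + k) * (x - c + k + 1)) := by
        rw [div_sub_div _ _ h1.ne' h2.ne']
        congr 1
        ring
      rw [h3, mul_one_div]
      exact div_le_div_of_nonneg_left hx0.le (by positivity) key
    have hs2 : Summable (fun k : ℕ => x / (x + (k:ℝ)) ^ 2) :=
      ((dg_summable_sq hx0).mul_left x).congr fun k => by rw [mul_one_div]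
    have := htel.summable.tsum_le_tsum hle hs2
    rwa [htel.tsum_eq, mul_one_div] at this
  -- upper bound for the y-sum
  have hup : ∑' k : ℕ, y / (y + k) ^ 2 ≤ y / (y - 1/2) := by
    have hyc : (0:ℝ) < y - 1/2 := by linarith
    have htel := (dg_hasSum_telescope hyc).mul_left y
    have hle : ∀ k : ℕ, y / (y + k) ^ 2 ≤ y * (1 / (y - 1/2 + k) - 1 / (y - 1/2 + k + 1)) := by
      intro k
      have hk : (0:ℝ) ≤ (k:ℝ) := Nat.cast_nonneg k
      have h1 : (0:ℝ) < y - 1/2 + k := by linarith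
      have h2 : (0:ℝ) < y - 1/2 + k + 1 := by linarith
      have key : (y - 1/2 + k) * (y - 1/2 + k + 1) ≤ (y + k) ^ 2 := by nlinarith
      have h3 : 1 / (y - 1/2 + k) - 1 / (y - 1/2 + k + 1)
          = 1 / ((y - 1/2 + k) * (y - 1/2 + k + 1)) := by
        rw [div_sub_div _ _ h1.ne' h2.ne']
        congr 1
        ring
      rw [h3, mul_one_div]
      exact div_le_div_of_nonneg_left hy0.le (by positivity) key
    have hs2 : Summable (fun k : ℕ => y / (y + (k:ℝ)) ^ 2) :=
      ((dg_summable_sq hy0).mul_left y).congr fun k => by rw [mul_one_div]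
    have := hs2.tsum_le_tsum hle htel.summable
    rwa [htel.tsum_eq, mul_one_div] at this
  -- middle strict inequality
  have hmid : y / (y - 1/2) < x / (x - c) := by
    rw [div_lt_div_iff₀ (by linarith) hxc]
    have hc' : c * (4 * x + 4) = 2 * x + 1 := by rw [hcdef]; field_simp
    nlinarith
  linarith

noncomputable def dgAux (x : ℝ) : ℝ :=
  -1 / x + ∑' k : ℕ, (Real.log (k + 2) - Real.log (k + 1) - 1 / (x + k + 1))

/-- bound on the summand -/
lemma dg_bound {R : ℝ} (k : ℕ) {z : ℝ} (hz : 0 < z) (hzR : z ≤ R) :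
    ‖Real.log (k + 2) - Real.log (k + 1) - 1 / (z + k + 1)‖ ≤ (1 + R) / ((k:ℝ) + 1) ^ 2 := by
  have hk1 : (0:ℝ) < (k:ℝ) + 1 := by positivity
  set u : ℝ := 1 / ((k:ℝ) + 1) with hu
  have hu0 : 0 < u := by positivity
  have hlogeq : Real.log (k + 2) - Real.log (k + 1) = Real.log (1 + u) := by
    rw [← Real.log_div (by positivity) hk1.ne']
    congr 1
    rw [hu]
    field_simp
    ring
  have h1u : (0:ℝ) < 1 + u := by linarith
  -- log(1+u) ≤ u
  have hup : Real.log (1 + u) ≤ u := by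
    have := Real.log_le_sub_one_of_pos h1u
    linarith
  -- log(1+u) ≥ u - u^2
  have hlo : u - u ^ 2 ≤ Real.log (1 + u) := by
    have h := Real.log_le_sub_one_of_pos (x := (1 + u)⁻¹) (by positivity)
    rw [Real.log_inv] at h
    have hinv : (1 + u)⁻¹ - 1 = -(u / (1 + u)) := by field_simp; ring
    rw [hinv] at h
    have h2 : u / (1 + u) ≤ Real.log (1 + u) := by linarith
    have h3 : u - u ^ 2 ≤ u / (1 + u) := by
      rw [le_div_iff₀ h1u]
      nlinarith
    linarith
  -- bounds on 1/(z+k+1)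
  have hzk : (0:ℝ) < z + k + 1 := by positivity
  have hfrac_le : 1 / (z + k + 1) ≤ u := by
    rw [hu]
    exact one_div_le_one_div_of_le hk1 (by linarith)
  have hfrac_ge : u - R * u ^ 2 ≤ 1 / (z + k + 1) := by
    have : u - 1 / (z + k + 1) = z / (((k:ℝ) + 1) * (z + k + 1)) := by
      rw [hu]
      field_simp
      ring
    have hzz : z / (((k:ℝ) + 1) * (z + k + 1)) ≤ R * u ^ 2 := by
      rw [hu, div_pow, one_pow, mul_div_assoc']
      rw [div_le_div_iff₀ (by positivity) (by positivity)]
      have : ((k:ℝ)+1)^2 ≤ ((k:ℝ)+1) * (z + k + 1) := by nlinarith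
      nlinarith
    linarith
  rw [Real.norm_eq_abs, hlogeq, abs_le]
  constructor
  · have : (1 + R) / ((k:ℝ) + 1) ^ 2 = (1 + R) * u ^ 2 := by rw [hu]; field_simp
    rw [this]
    nlinarith
  · have : (1 + R) / ((k:ℝ) + 1) ^ 2 = (1 + R) * u ^ 2 := by rw [hu]; field_simp
    rw [this]
    nlinarith

lemma dg_summable_bound (R : ℝ) : Summable (fun k : ℕ => (1 + R) / ((k:ℝ) + 1) ^ 2) := by
  have h1 : Summable (fun k : ℕ => 1 / ((k : ℝ) + 1) ^ 2) := by
    have := (summable_nat_add_iff (f := fun n : ℕ => 1 / (n : ℝ) ^ 2) 1).2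
      (Real.summable_one_div_nat_pow.2 one_lt_two)
    refine this.congr fun n => ?_
    push_cast; ring
  refine (h1.mul_left (1 + R)).congr fun k => ?_
  rw [mul_one_div]

lemma dg_summable_g {z : ℝ} (hz : 0 < z) :
    Summable (fun k : ℕ => Real.log (k + 2) - Real.log (k + 1) - 1 / (z + k + 1)) :=
  Summable.of_norm_bounded (dg_summable_bound z) (fun k => dg_bound k hz le_rfl)

lemma dg_hasDerivAt {x : ℝ} (hx : 0 < x) :
    HasDerivAt (fun y : ℝ => Real.log (Real.Gamma y)) (dgAux x) x := by
  set R : ℝ := x + 1 with hR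
  set s : Set ℝ := Set.Ioo 0 R with hs
  have hxs : x ∈ s := ⟨hx, by rw [hR]; linarith⟩
  apply hasDerivAt_of_tendstoUniformlyOn (l := atTop) (f := fun (n : ℕ) (z : ℝ) => Real.BohrMollerup.logGammaSeq z n)
      (f' := fun (n : ℕ) (z : ℝ) => Real.log n - ∑ m ∈ Finset.range (n + 1), 1 / (z + m))
      isOpen_Ioo ?_ ?_ ?_ hxs
  · -- uniform convergence of derivatives
    have hu : TendstoUniformlyOn
        (fun (n : ℕ) (z : ℝ) => ∑ k ∈ Finset.range n,
          (Real.log (k + 2) - Real.log (k + 1) - 1 / (z + k + 1)))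
        (fun z => ∑' k : ℕ, (Real.log (k + 2) - Real.log (k + 1) - 1 / (z + k + 1)))
        atTop s :=
      tendstoUniformlyOn_tsum_nat (dg_summable_bound R)
        (fun k z hzs => dg_bound k hzs.1 hzs.2.le)
    have he : Tendsto (fun n : ℕ => Real.log (n + 1) - Real.log n) atTop (𝓝 0) :=
      Real.tendsto_log_nat_add_one_sub_log
    rw [Metric.tendstoUniformlyOn_iff] at hu ⊢
    intro ε hε
    have hε2 : 0 < ε / 2 := by linarith
    filter_upwards [hu (ε / 2) hε2, he.eventually (Metric.ball_mem_nhds 0 hε2)] with n h1 h2 z hzs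
    have hz : 0 < z := hzs.1
    -- identity: f' n z = partial sum - 1/z - (log(n+1) - log n)
    have hid : Real.log n - ∑ m ∈ Finset.range (n + 1), 1 / (z + m)
        = (∑ k ∈ Finset.range n, (Real.log (k + 2) - Real.log (k + 1) - 1 / (z + k + 1)))
          - 1 / z - (Real.log (n + 1) - Real.log n) := by
      have hsplit : ∑ m ∈ Finset.range (n + 1), 1 / (z + (m:ℝ))
          = (∑ m ∈ Finset.range n, 1 / (z + (m:ℝ) + 1)) + 1 / z := by
        rw [Finset.sum_range_succ' (fun m : ℕ => 1 / (z + (m:ℝ))) n]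
        push_cast
        simp [← add_assoc]
      have hlogs : ∑ k ∈ Finset.range n, (Real.log ((k:ℝ) + 2) - Real.log ((k:ℝ) + 1))
          = Real.log ((n:ℝ) + 1) := by
        have := Finset.sum_range_sub (fun k : ℕ => Real.log ((k:ℝ) + 1)) n
        push_cast at this
        calc ∑ k ∈ Finset.range n, (Real.log ((k:ℝ) + 2) - Real.log ((k:ℝ) + 1))
            = Real.log ((n:ℝ) + 1) - Real.log ((0:ℝ) + 1) := by
              rw [← this]
              refine Finset.sum_congr rfl fun i _ => ?_
              norm_num [add_assoc]
          _ = Real.log ((n:ℝ) + 1) := by norm_num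
      rw [Finset.sum_sub_distrib, hlogs, hsplit]
      ring
    rw [hid]
    have hd1 : dist (dgAux z) ((∑ k ∈ Finset.range n,
        (Real.log (k + 2) - Real.log (k + 1) - 1 / (z + k + 1))) - 1 / z
          - (Real.log (n + 1) - Real.log n))
        ≤ dist (∑' k : ℕ, (Real.log (k + 2) - Real.log (k + 1) - 1 / (z + k + 1)))
            (∑ k ∈ Finset.range n, (Real.log (k + 2) - Real.log (k + 1) - 1 / (z + k + 1)))
          + dist (0:ℝ) (Real.log (n + 1) - Real.log n) := by
      rw [Real.dist_eq, Real.dist_eq, Real.dist_eq, dgAux]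
      have : -1 / z + (∑' k : ℕ, (Real.log (k + 2) - Real.log (k + 1) - 1 / (z + k + 1)))
          - ((∑ k ∈ Finset.range n, (Real.log (k + 2) - Real.log (k + 1) - 1 / (z + k + 1)))
            - 1 / z - (Real.log (n + 1) - Real.log n))
          = ((∑' k : ℕ, (Real.log (k + 2) - Real.log (k + 1) - 1 / (z + k + 1)))
            - (∑ k ∈ Finset.range n, (Real.log (k + 2) - Real.log (k + 1) - 1 / (z + k + 1))))
            + (0 - (Real.log (n + 1) - Real.log n)) * (-1) := by ring
      rw [this]
      calc |_ + _ * (-1)| ≤ |_| + |(_ : ℝ) * (-1)| := abs_add_le _ _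
        _ = _ + |(0:ℝ) - (Real.log (n + 1) - Real.log n)| := by rw [abs_mul]; simp
    have := h1 z hzs
    rw [dist_comm] at h2
    calc dist (dgAux z) _ ≤ _ := hd1
      _ < ε / 2 + ε / 2 := by
          refine add_lt_add ?_ ?_
          · exact h1 z hzs
          · simpa [Real.dist_eq] using h2
      _ = ε := by ring
  · -- each term differentiable
    filter_upwards with n
    intro z hzs
    have hz : 0 < z := hzs.1
    have hsum : HasDerivAt (fun z : ℝ => ∑ m ∈ Finset.range (n + 1), Real.log (z + m))
        (∑ m ∈ Finset.range (n + 1), 1 / (z + m)) z := by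
      refine HasDerivAt.fun_sum fun m _ => ?_
      have hzm : z + (m:ℝ) ≠ 0 := by positivity
      have := ((hasDerivAt_id z).add_const (m:ℝ)).log hzm
      simpa [one_div] using this
    have h1 : HasDerivAt (fun z : ℝ => z * Real.log n + Real.log (Nat.factorial n)
        - ∑ m ∈ Finset.range (n + 1), Real.log (z + m))
        (Real.log n - ∑ m ∈ Finset.range (n + 1), 1 / (z + m)) z := by
      have := (((hasDerivAt_id z).mul_const (Real.log n)).add_const
        (Real.log (Nat.factorial n))).fun_sub hsum
      simpa using this
    refine h1.congr_of_eventuallyEq ?_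
    filter_upwards with w
    simp [Real.BohrMollerup.logGammaSeq]
  · -- pointwise convergence
    intro z hzs
    exact Real.BohrMollerup.tendsto_log_gamma hzs.1

/-- The digamma function: the logarithmic derivative of the Gamma function. -/
noncomputable def digamma (x : ℝ) : ℝ :=
  deriv (fun y : ℝ => Real.log (Real.Gamma y)) x

lemma digamma_eq {x : ℝ} (hx : 0 < x) : digamma x = dgAux x :=
  (dg_hasDerivAt hx).deriv

lemma dg_summable_diff {p q : ℝ} (hp : 0 < p) (hpq : p < q) :
    Summable (fun k : ℕ => 1 / (p + k) - 1 / (q + k)) := by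
  refine Summable.of_nonneg_of_le (fun k => ?_) (fun k => ?_)
    ((dg_summable_sq hp).mul_left (q - p))
  · have h1 : (0:ℝ) < p + k := by positivity
    have h2 : (0:ℝ) < q + k := by linarith
    rw [sub_nonneg]
    exact one_div_le_one_div_of_le h1 (by linarith)
  · have h1 : (0:ℝ) < p + k := by positivity
    have h2 : (0:ℝ) < q + k := by linarith
    rw [div_sub_div _ _ h1.ne' h2.ne']
    rw [mul_one_div, div_le_div_iff₀ (by positivity) (by positivity)]
    nlinarith [mul_le_mul_of_nonneg_left (show p + (k:ℝ) ≤ q + ↑k by linarith)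
      (mul_nonneg (sub_nonneg.2 hpq.le) h1.le)]

lemma digamma_sub {p q : ℝ} (hp : 0 < p) (hpq : p < q) :
    digamma q - digamma p = ∑' k : ℕ, (1 / (p + k) - 1 / (q + k)) := by
  rw [digamma_eq hp, digamma_eq (lt_trans hp hpq), dgAux, dgAux]
  have hsq := dg_summable_g (lt_trans hp hpq)
  have hsp := dg_summable_g hp
  have hdiff : ∑' k : ℕ, ((Real.log (k + 2) - Real.log (k + 1) - 1 / (q + k + 1))
      - (Real.log (k + 2) - Real.log (k + 1) - 1 / (p + k + 1)))
      = (∑' k : ℕ, (Real.log (k + 2) - Real.log (k + 1) - 1 / (q + k + 1)))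
        - ∑' k : ℕ, (Real.log (k + 2) - Real.log (k + 1) - 1 / (p + k + 1)) :=
    hsq.tsum_sub hsp
  have hbody : ∀ k : ℕ, ((Real.log (k + 2) - Real.log (k + 1) - 1 / (q + k + 1))
      - (Real.log (k + 2) - Real.log (k + 1) - 1 / (p + k + 1)))
      = 1 / (p + k + 1) - 1 / (q + k + 1) := fun k => by ring
  rw [tsum_congr hbody] at hdiff
  have hshift : ∑' k : ℕ, (1 / (p + k) - 1 / (q + k))
      = (1 / p - 1 / q) + ∑' k : ℕ, (1 / (p + k + 1) - 1 / (q + k + 1)) := by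
    rw [(dg_summable_diff hp hpq).tsum_eq_zero_add]
    push_cast
    norm_num [add_assoc]
  rw [hshift, hdiff]
  ring

lemma dg_G_lt {a b l : ℝ} (ha : 1 ≤ a) (hab : a + 1 ≤ b) (hl : 1 < l) :
    ∑' k : ℕ, (1 / (l * a + k) - 1 / (l * b + k))
      < ∑' k : ℕ, (1 / (a + k) - 1 / (b + k)) := by
  have ha0 : (0:ℝ) < a := by linarith
  have hb0 : (0:ℝ) < b := by linarith
  set G : ℝ → ℝ := fun μ => ∑' k : ℕ, (1 / (μ * a + k) - 1 / (μ * b + k)) with hG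
  -- derivative of G on Ioo (1/2) (l+1)
  have hD : ∀ μ ∈ Set.Ioo (1/2 : ℝ) (l + 1),
      HasDerivAt G (∑' k : ℕ, (b / (μ * b + k) ^ 2 - a / (μ * a + k) ^ 2)) μ := by
    intro μ hμ
    have hμ0 : (0:ℝ) < μ := lt_trans (by norm_num) hμ.1
    apply hasDerivAt_of_tendstoUniformlyOn (l := atTop)
        (f := fun (n : ℕ) (μ : ℝ) => ∑ k ∈ Finset.range n, (1 / (μ * a + k) - 1 / (μ * b + k)))
        (f' := fun (n : ℕ) (μ : ℝ) => ∑ k ∈ Finset.range n,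
          (b / (μ * b + k) ^ 2 - a / (μ * a + k) ^ 2))
        isOpen_Ioo ?_ ?_ ?_ hμ
    · -- uniform convergence of derivatives via M-test
      have hsum : Summable (fun k : ℕ => b / (b / 2 + k) ^ 2 + a / (a / 2 + k) ^ 2) := by
        refine Summable.add ?_ ?_
        · exact ((dg_summable_sq (by linarith : (0:ℝ) < b / 2)).mul_left b).congr
            fun k => by rw [mul_one_div]
        · exact ((dg_summable_sq (by linarith : (0:ℝ) < a / 2)).mul_left a).congr
            fun k => by rw [mul_one_div]
      refine tendstoUniformlyOn_tsum_nat hsum ?_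
      intro k μ hμs
      have hμ2 : (1:ℝ)/2 < μ := hμs.1
      have hk : (0:ℝ) ≤ (k:ℝ) := Nat.cast_nonneg k
      have hb2 : (0:ℝ) < b / 2 + k := by linarith
      have ha2 : (0:ℝ) < a / 2 + k := by linarith
      have hbμ : (0:ℝ) < μ * b + k := by nlinarith
      have haμ : (0:ℝ) < μ * a + k := by nlinarith
      have e1 : b / (μ * b + k) ^ 2 ≤ b / (b / 2 + k) ^ 2 := by
        apply div_le_div_of_nonneg_left hb0.le (by positivity)
        have : b / 2 + (k:ℝ) ≤ μ * b + k := by nlinarith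
        nlinarith
      have e2 : a / (μ * a + k) ^ 2 ≤ a / (a / 2 + k) ^ 2 := by
        apply div_le_div_of_nonneg_left ha0.le (by positivity)
        have : a / 2 + (k:ℝ) ≤ μ * a + k := by nlinarith
        nlinarith
      have p1 : (0:ℝ) ≤ b / (μ * b + k) ^ 2 := by positivity
      have p2 : (0:ℝ) ≤ a / (μ * a + k) ^ 2 := by positivity
      rw [Real.norm_eq_abs, abs_le]
      constructor <;> nlinarith
    · -- differentiability of partial sums
      filter_upwards with n
      intro μ hμs
      have hμ0' : (0:ℝ) < μ := lt_trans (by norm_num) hμs.1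
      refine HasDerivAt.fun_sum fun k _ => ?_
      have hk : (0:ℝ) ≤ (k:ℝ) := Nat.cast_nonneg k
      have haμ : (0:ℝ) < μ * a + k := by nlinarith
      have hbμ : (0:ℝ) < μ * b + k := by nlinarith
      have d1 : HasDerivAt (fun μ : ℝ => μ * a + k) a μ := by
        simpa using (hasDerivAt_id μ).mul_const a |>.add_const (k:ℝ)
      have d2 : HasDerivAt (fun μ : ℝ => μ * b + k) b μ := by
        simpa using (hasDerivAt_id μ).mul_const b |>.add_const (k:ℝ)
      have i1 := d1.inv haμ.ne'
      have i2 := d2.inv hbμ.ne'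
      have := i1.sub i2
      refine HasDerivAt.congr_deriv (this.congr_of_eventuallyEq ?_) (by ring)
      filter_upwards with w
      simp [one_div]
    · -- pointwise convergence
      intro μ hμs
      have hμ0' : (0:ℝ) < μ := lt_trans (by norm_num) hμs.1
      have hs : Summable (fun k : ℕ => 1 / (μ * a + k) - 1 / (μ * b + k)) :=
        dg_summable_diff (by positivity) (by nlinarith)
      exact hs.hasSum.tendsto_sum_nat
  have hsub : Set.Icc (1:ℝ) l ⊆ Set.Ioo (1/2 : ℝ) (l + 1) := fun μ hμ =>
    ⟨by linarith [hμ.1], by linarith [hμ.2]⟩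
  have hanti : StrictAntiOn G (Set.Icc 1 l) := by
    refine strictAntiOn_of_deriv_neg (convex_Icc 1 l) ?_ ?_
    · intro μ hμ
      exact ((hD μ (hsub hμ)).continuousAt).continuousWithinAt
    · intro μ hμ
      rw [interior_Icc] at hμ
      have hμ1 : 1 < μ := hμ.1
      have hμ0 : (0:ℝ) < μ := by linarith
      rw [(hD μ (hsub ⟨hμ.1.le, hμ.2.le⟩)).deriv]
      -- rewrite as μ⁻¹ * (y-sum - x-sum)
      set x : ℝ := μ * a with hx
      set y : ℝ := μ * b with hy
      have hx1 : 1 ≤ x := by rw [hx]; nlinarith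
      have hxy : x + 1 ≤ y := by rw [hx, hy]; nlinarith
      have hx0 : (0:ℝ) < x := by linarith
      have hy0 : (0:ℝ) < y := by linarith
      have hsx : Summable (fun k : ℕ => x / (x + k) ^ 2) :=
        ((dg_summable_sq hx0).mul_left x).congr fun k => by rw [mul_one_div]
      have hsy : Summable (fun k : ℕ => y / (y + k) ^ 2) :=
        ((dg_summable_sq hy0).mul_left y).congr fun k => by rw [mul_one_div]
      have hbody : ∀ k : ℕ, b / (μ * b + k) ^ 2 - a / (μ * a + k) ^ 2
          = μ⁻¹ * (y / (y + k) ^ 2 - x / (x + k) ^ 2) := by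
        intro k
        rw [hx, hy]
        field_simp
      rw [tsum_congr hbody, tsum_mul_left, hsy.tsum_sub hsx]
      have hcore := dg_core hx1 hxy
      have : (0:ℝ) < μ⁻¹ := by positivity
      exact mul_neg_of_pos_of_neg this (by linarith)
  have h1mem : (1:ℝ) ∈ Set.Icc (1:ℝ) l := ⟨le_refl 1, hl.le⟩
  have hlmem : l ∈ Set.Icc (1:ℝ) l := ⟨hl.le, le_refl l⟩
  have := hanti h1mem hlmem hl
  rw [hG] at this
  simpa using this

/-- For positive integers `a_h > a_0` and `λ > 1`,
`E₀ = [ψ(a_h) - ψ(λ a_h)] - [ψ(a_0) - ψ(λ a_0)] > 0`. -/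
theorem stmt9 (l : ℝ) (hl : 1 < l) (ah a0 : ℕ) (ha0 : 1 ≤ a0)
    (hlt : a0 < ah) :
    0 < (digamma (ah : ℝ) - digamma (l * (ah : ℝ)))
        - (digamma (a0 : ℝ) - digamma (l * (a0 : ℝ))) := by
  set a : ℝ := (a0 : ℝ) with hadef
  set b : ℝ := (ah : ℝ) with hbdef
  have ha1 : 1 ≤ a := by rw [hadef]; exact_mod_cast ha0
  have hab : a + 1 ≤ b := by
    have : (a0 + 1 : ℕ) ≤ ah := hlt
    calc a + 1 = ((a0 + 1 : ℕ) : ℝ) := by push_cast; ring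
      _ ≤ b := by rw [hbdef]; exact_mod_cast this
  have ha0' : (0:ℝ) < a := by linarith
  have hb0 : (0:ℝ) < b := by linarith
  have habe : a < b := by linarith
  have hla : (0:ℝ) < l * a := by nlinarith
  have hlab : l * a < l * b := by nlinarith
  have h1 := digamma_sub ha0' habe
  have h2 := digamma_sub hla hlab
  have h3 := dg_G_lt ha1 hab hl
  linarith
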